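/- For a fixed n ≥ 2 and d ≥ 0, the set of isomorphism classes of stable (n,d)-trees is finite. -/

import Mathlib

/-- A stable `(n,d)`-tree: a tree (flags `F`, vertices `V`, attaching map
`par`, involution `j`; leaves are the fixed points of `j`, edges are the
two-element orbits of `j`; the tree condition is `#V = #E + 1` together with
connectedness) whose leaves are bijectively labelled by `{1,…,n}`, together
with a degree map `deg : V → ℤ≥0` of total sum `d`, such that every vertex `v`
has `deg v ≠ 0` or valence `> 2`. -/
structure StableTree (n d : ℕ) : Type 1 where
  /-- The set of flags. -/
  F : Type
  /-- The set of vertices. -/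
  V : Type
  finF : Finite F
  finV : Finite V
  /-- Each flag is attached to a unique vertex. -/
  par : F → V
  /-- The involution whose fixed points are the leaves and whose two-element
  orbits are the edges. -/
  j : F → F
  jinv : Function.Involutive j
  /-- Connectedness of the tree. -/
  conn : ∀ v w : V,
    Relation.ReflTransGen (fun a b => ∃ f, j f ≠ f ∧ par f = a ∧ par (j f) = b) v w
  /-- The tree condition `#V = #E + 1`. -/
  treeCard : Nat.card V =
    Nat.card {s : Sym2 F // ∃ f, j f ≠ f ∧ s = Sym2.mk f (j f)} + 1
  /-- The bijective labelling of the leaves by `{1,…,n}`. -/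
  label : {f : F // j f = f} ≃ Fin n
  /-- The degree map `β : V → ℤ≥0`. -/
  deg : V → ℕ
  /-- The total degree is `d`. -/
  degSum : ∑ᶠ v : V, deg v = d
  /-- Stability: every vertex has nonzero degree or valence `> 2`. -/
  stable : ∀ v : V, deg v ≠ 0 ∨ 2 < Nat.card {f : F // par f = v}

/-- Isomorphism of stable `(n,d)`-trees: a graph isomorphism compatible with
the leaf labels and the vertex degrees. -/
def StableTree.Iso {n d : ℕ} (t t' : StableTree n d) : Prop :=
  ∃ (eF : t.F ≃ t'.F) (eV : t.V ≃ t'.V),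
    (∀ f, eV (t.par f) = t'.par (eF f)) ∧
    (∀ f, eF (t.j f) = t'.j (eF f)) ∧
    (∀ (f : {f // t.j f = f}) (g : {f // t'.j f = f}),
      eF f.1 = g.1 → t.label f = t'.label g) ∧
    (∀ v, t.deg v = t'.deg (eV v))

namespace StableTreeAux

open StableTree

variable {n d : ℕ}

/-- Bound on the number of flags, vertices, and degrees of a stable tree. -/
theorem exists_bound (t : StableTree n d) (hn : 2 ≤ n) :
    Nat.card t.F ≤ 3 * n + 4 * d ∧ Nat.card t.V ≤ 3 * n + 4 * d ∧
      ∀ v, t.deg v ≤ d := by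
  haveI := t.finF; haveI := t.finV
  haveI : Fintype t.F := Fintype.ofFinite _
  haveI : Fintype t.V := Fintype.ofFinite _
  classical
  have hsum : ∑ v, t.deg v = d := by
    rw [← finsum_eq_sum_of_fintype]; exact t.degSum
  have hdeg : ∀ v, t.deg v ≤ d := by
    intro v
    calc t.deg v ≤ ∑ w, t.deg w :=
          Finset.single_le_sum (fun i _ => Nat.zero_le _) (Finset.mem_univ v)
      _ = d := hsum
  -- number of leaves
  have hfix : Fintype.card {f // t.j f = f} = n := by
    rw [Fintype.card_congr t.label, Fintype.card_fin]
  -- number of edges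
  set E := Fintype.card {s : Sym2 t.F // ∃ f, t.j f ≠ f ∧ s = Sym2.mk f (t.j f)} with hE
  have hnonfix : Fintype.card {f // ¬ t.j f = f} = 2 * E := by
    let φ : {f // ¬ t.j f = f} →
        {s : Sym2 t.F // ∃ f, t.j f ≠ f ∧ s = Sym2.mk f (t.j f)} :=
      fun f => ⟨Sym2.mk f.1 (t.j f.1), f.1, f.2, rfl⟩
    have h1 : Fintype.card {f // ¬ t.j f = f} = ∑ e, Fintype.card {a // φ a = e} := by
      rw [← Fintype.card_sigma]
      exact Fintype.card_congr (Equiv.sigmaFiberEquiv φ).symm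
    have hfib : ∀ e, Fintype.card {a // φ a = e} = 2 := by
      rintro ⟨s, f, hf, rfl⟩
      rw [← Nat.card_eq_fintype_card, Nat.card_eq_two_iff]
      have hjf : ¬ t.j (t.j f) = t.j f := by
        rw [t.jinv f]; exact fun h => hf h.symm
      refine ⟨⟨⟨f, hf⟩, Subtype.ext rfl⟩,
        ⟨⟨t.j f, hjf⟩, Subtype.ext ?_⟩, ?_, ?_⟩
      · show Sym2.mk (t.j f) (t.j (t.j f)) = Sym2.mk f (t.j f)
        rw [t.jinv f]; exact Sym2.eq_swap
      · intro h
        have := congrArg (fun z => (z.1 : t.F)) h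
        exact hf this.symm
      · apply Set.eq_univ_of_forall
        rintro ⟨⟨g, hg⟩, hz⟩
        have hz' : Sym2.mk g (t.j g) = Sym2.mk f (t.j f) := congrArg Subtype.val hz
        rcases Sym2.eq_iff.mp hz' with ⟨h1, _⟩ | ⟨h1, _⟩
        · left; exact Subtype.ext (Subtype.ext h1)
        · right; exact Subtype.ext (Subtype.ext h1)
    rw [h1, Finset.sum_congr rfl (fun e _ => hfib e), Finset.sum_const,
      Finset.card_univ, smul_eq_mul, mul_comm]
  have hF : Fintype.card t.F = n + 2 * E := by
    have hsplit : Fintype.card {f // t.j f = f} + Fintype.card {f // ¬ t.j f = f} =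
        Fintype.card t.F := by
      rw [← Fintype.card_sum]
      exact Fintype.card_congr (Equiv.sumCompl (fun f => t.j f = f))
    omega
  have hV : Fintype.card t.V = E + 1 := by
    have h := t.treeCard
    rwa [Nat.card_eq_fintype_card, Nat.card_eq_fintype_card] at h
  have hval : ∑ v, Fintype.card {f // t.par f = v} = Fintype.card t.F := by
    rw [← Fintype.card_sigma]
    exact Fintype.card_congr (Equiv.sigmaFiberEquiv t.par)
  rcases Nat.lt_or_ge (Fintype.card t.V) 2 with h2 | h2
  · have hE0 : E = 0 := by omega
    rw [Nat.card_eq_fintype_card, Nat.card_eq_fintype_card]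
    refine ⟨?_, ?_, hdeg⟩ <;> omega
  · have hval1 : ∀ v, 1 ≤ Fintype.card {f // t.par f = v} := by
      intro v
      rw [Nat.succ_le_iff, Fintype.card_pos_iff]
      haveI : Nontrivial t.V := Fintype.one_lt_card_iff_nontrivial.mp h2
      obtain ⟨w, hw⟩ := exists_ne v
      have hc := t.conn v w
      rcases Relation.ReflTransGen.cases_head hc with heq | ⟨b, ⟨f, _, hfv, _⟩, _⟩
      · exact absurd heq.symm hw
      · exact ⟨⟨f, hfv⟩⟩
    have hval3 : ∀ v, t.deg v = 0 → 3 ≤ Fintype.card {f // t.par f = v} := by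
      intro v hv
      rcases t.stable v with h | h
      · exact absurd hv h
      · rw [Nat.card_eq_fintype_card] at h; omega
    set A := (Finset.univ.filter fun v : t.V => t.deg v = 0).card with hA
    set A' := (Finset.univ.filter fun v : t.V => ¬ t.deg v = 0).card with hA'
    have hAA' : A + A' = Fintype.card t.V := by
      rw [hA, hA', ← Finset.card_univ]
      exact Finset.card_filter_add_card_filter_not _
    have hA'd : A' ≤ d := by
      have : A' = ∑ _v ∈ Finset.univ.filter (fun v : t.V => ¬ t.deg v = 0), 1 :=
        Finset.card_eq_sum_ones _
      rw [this]
      calc ∑ v ∈ Finset.univ.filter (fun v : t.V => ¬ t.deg v = 0), 1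
          ≤ ∑ v ∈ Finset.univ.filter (fun v : t.V => ¬ t.deg v = 0), t.deg v := by
            refine Finset.sum_le_sum ?_
            intro i hi
            simp only [Finset.mem_filter] at hi
            omega
        _ ≤ ∑ v, t.deg v :=
            Finset.sum_le_sum_of_subset (Finset.filter_subset _ _)
        _ = d := hsum
    have key : 3 * A + A' ≤ Fintype.card t.F := by
      rw [← hval]
      calc 3 * A + A'
          = (∑ _v ∈ Finset.univ.filter (fun v : t.V => t.deg v = 0), 3) +
            ∑ _v ∈ Finset.univ.filter (fun v : t.V => ¬ t.deg v = 0), 1 := by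
            rw [Finset.sum_const, Finset.sum_const, smul_eq_mul, smul_eq_mul]
            ring
        _ ≤ (∑ v ∈ Finset.univ.filter (fun v : t.V => t.deg v = 0),
              Fintype.card {f // t.par f = v}) +
            ∑ v ∈ Finset.univ.filter (fun v : t.V => ¬ t.deg v = 0),
              Fintype.card {f // t.par f = v} := by
            refine add_le_add (Finset.sum_le_sum ?_) (Finset.sum_le_sum ?_)
            · intro v hv
              simp only [Finset.mem_filter] at hv
              exact hval3 v hv.2
            · intro v _
              exact hval1 v
        _ = ∑ v, Fintype.card {f // t.par f = v} :=
            Finset.sum_filter_add_sum_filter_not _ _ _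
    rw [Nat.card_eq_fintype_card, Nat.card_eq_fintype_card]
    refine ⟨?_, ?_, hdeg⟩ <;> omega

/-- The finite type of encodings. -/
def Enc (n d B : ℕ) : Type :=
  Σ k : Fin (B + 1), Σ m : Fin (B + 1),
    (Fin k → Fin m) × (Fin k → Fin k) × (Fin k → Fin n) × (Fin m → Fin (d + 1))

instance (n d B : ℕ) : Finite (Enc n d B) := by
  unfold Enc; infer_instance

/-- `s` encodes the stable tree `t`. -/
def Encodes (t : StableTree n d) {B : ℕ} (s : Enc n d B) : Prop :=
  ∃ (eF : t.F ≃ Fin s.1) (eV : t.V ≃ Fin s.2.1),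
    (∀ f, s.2.2.1 (eF f) = eV (t.par f)) ∧
    (∀ f, s.2.2.2.1 (eF f) = eF (t.j f)) ∧
    (∀ (f : t.F) (h : t.j f = f), s.2.2.2.2.1 (eF f) = t.label ⟨f, h⟩) ∧
    (∀ v, (s.2.2.2.2.2 (eV v) : ℕ) = t.deg v)

theorem iso_symm {t t' : StableTree n d} (h : t.Iso t') : t'.Iso t := by
  obtain ⟨eF, eV, hpar, hj, hlab, hdeg⟩ := h
  refine ⟨eF.symm, eV.symm, ?_, ?_, ?_, ?_⟩
  · intro f
    apply eV.injective
    rw [Equiv.apply_symm_apply, hpar, Equiv.apply_symm_apply]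
  · intro f
    apply eF.injective
    rw [Equiv.apply_symm_apply, hj, Equiv.apply_symm_apply]
  · intro f g hfg
    exact (hlab g f (by rw [← hfg, Equiv.apply_symm_apply])).symm
  · intro v
    rw [hdeg (eV.symm v), Equiv.apply_symm_apply]

theorem encodes_of_iso {t t' : StableTree n d} (h : t.Iso t') {B : ℕ}
    {s : Enc n d B} (hs : Encodes t s) : Encodes t' s := by
  obtain ⟨eF0, eV0, hpar, hj, hlab, hdeg⟩ := h
  obtain ⟨eF, eV, h1, h2, h3, h4⟩ := hs
  refine ⟨eF0.symm.trans eF, eV0.symm.trans eV, ?_, ?_, ?_, ?_⟩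
  · intro f
    simp only [Equiv.trans_apply]
    rw [h1]
    congr 1
    apply eV0.injective
    rw [hpar, Equiv.apply_symm_apply, Equiv.apply_symm_apply]
  · intro f
    simp only [Equiv.trans_apply]
    rw [h2]
    congr 1
    apply eF0.injective
    rw [hj, Equiv.apply_symm_apply, Equiv.apply_symm_apply]
  · intro f hf
    simp only [Equiv.trans_apply]
    have hfix : t.j (eF0.symm f) = eF0.symm f := by
      apply eF0.injective
      rw [hj, Equiv.apply_symm_apply, hf]
    rw [h3 _ hfix]
    exact hlab ⟨_, hfix⟩ ⟨f, hf⟩ (eF0.apply_symm_apply f)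
  · intro v
    simp only [Equiv.trans_apply]
    rw [h4, hdeg (eV0.symm v), Equiv.apply_symm_apply]

theorem iso_of_encodes {t t' : StableTree n d} {B : ℕ} {s : Enc n d B}
    (h1 : Encodes t s) (h2 : Encodes t' s) : t.Iso t' := by
  obtain ⟨eF1, eV1, p1, j1, l1, d1⟩ := h1
  obtain ⟨eF2, eV2, p2, j2, l2, d2⟩ := h2
  refine ⟨eF1.trans eF2.symm, eV1.trans eV2.symm, ?_, ?_, ?_, ?_⟩
  · intro f
    simp only [Equiv.trans_apply]
    apply eV2.injective
    rw [Equiv.apply_symm_apply, ← p1, ← p2, Equiv.apply_symm_apply]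
  · intro f
    simp only [Equiv.trans_apply]
    apply eF2.injective
    rw [Equiv.apply_symm_apply, ← j1, ← j2, Equiv.apply_symm_apply]
  · rintro ⟨f, hf⟩ ⟨g, hg⟩ hfg
    simp only [Equiv.trans_apply] at hfg
    have hfg' : eF1 f = eF2 g := by rw [← hfg, Equiv.apply_symm_apply]
    have e1 := l1 f hf
    have e2 := l2 g hg
    rw [hfg', e2] at e1
    exact e1.symm
  · intro v
    simp only [Equiv.trans_apply]
    rw [← d1, ← d2, Equiv.apply_symm_apply]

theorem exists_encodes (t : StableTree n d) (hn : 2 ≤ n) :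
    ∃ s : Enc n d (3 * n + 4 * d), Encodes t s := by
  obtain ⟨hF, hV, hdeg⟩ := exists_bound t hn
  haveI := t.finF; haveI := t.finV
  haveI : Fintype t.F := Fintype.ofFinite _
  haveI : Fintype t.V := Fintype.ofFinite _
  rw [Nat.card_eq_fintype_card] at hF hV
  classical
  let eF := Fintype.equivFin t.F
  let eV := Fintype.equivFin t.V
  refine ⟨⟨⟨Fintype.card t.F, by omega⟩, ⟨Fintype.card t.V, by omega⟩,
    fun i => eV (t.par (eF.symm i)),
    fun i => eF (t.j (eF.symm i)),
    fun i => if h : t.j (eF.symm i) = eF.symm i then t.label ⟨_, h⟩ else ⟨0, by omega⟩,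
    fun i => ⟨t.deg (eV.symm i), by have := hdeg (eV.symm i); omega⟩⟩,
    eF, eV, ?_, ?_, ?_, ?_⟩
  · intro f; simp
  · intro f; simp
  · intro f h
    simp only [Equiv.symm_apply_apply]
    rw [dif_pos h]
  · intro v; simp

end StableTreeAux

/-- For fixed `n ≥ 2` and `d ≥ 0`, the set of isomorphism classes of stable
`(n,d)`-trees is finite. -/
theorem finite_isoClasses_stableTrees (n d : ℕ) (hn : 2 ≤ n) :
    Finite (Quot (StableTree.Iso (n := n) (d := d))) := by
  let enc : StableTree n d → (StableTreeAux.Enc n d (3 * n + 4 * d) → Prop) :=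
    fun t s => StableTreeAux.Encodes t s
  have hlift : ∀ t t', StableTree.Iso t t' → enc t = enc t' := by
    intro t t' h
    funext s
    exact propext ⟨StableTreeAux.encodes_of_iso h,
      StableTreeAux.encodes_of_iso (StableTreeAux.iso_symm h)⟩
  have hinj : Function.Injective (Quot.lift enc hlift) := by
    intro a b
    induction a using Quot.ind with
    | _ t =>
    induction b using Quot.ind with
    | _ t' =>
    intro hab
    apply Quot.sound
    obtain ⟨s, hs⟩ := StableTreeAux.exists_encodes t hn
    have hs' : StableTreeAux.Encodes t' s :=
      (congrFun (show enc t = enc t' from hab) s).mp hs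
    exact StableTreeAux.iso_of_encodes hs hs'
  exact Finite.of_injective _ hinj
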